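/- Let (α_j) be a positive sequence with Σ_j α_j = ∞ and α_j → 0, and let x_{j+1} = x_j + α_j sgn(d_j − x_j) with |d_j − d| < ε/2 for all j ≥ j₀ and α_j < ε/2 for j ≥ j₀. Then there exists j₁ ≥ j₀ such that |x_{j₁} − d| < ε. -/

import Mathlib

open Filter

/-- Sign function: 1 if positive, -1 if negative, 0 at zero. -/
noncomputable def sgn (z : ℝ) : ℝ := if 0 < z then 1 else if z < 0 then -1 else 0

theorem stmt_14 (α : ℕ → ℝ) (hαpos : ∀ j, 0 < α j) (hα0 : Tendsto α atTop (nhds 0))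
    (hαdiv : Tendsto (fun n => ∑ j ∈ Finset.range n, α j) atTop atTop)
    (d : ℕ → ℝ) (dlim : ℝ) (ε : ℝ) (hε : 0 < ε) (j₀ : ℕ)
    (hd : ∀ j ≥ j₀, |d j - dlim| < ε / 2) (hα : ∀ j ≥ j₀, α j < ε / 2)
    (x : ℕ → ℝ) (hx : ∀ j, x (j + 1) = x j + α j * sgn (d j - x j)) :
    ∃ j₁ ≥ j₀, |x j₁ - dlim| < ε := by
  by_contra h
  push_neg at h
  have habs : ∀ j ≥ j₀, ε ≤ |x j - dlim| := h
  -- case split on initial position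
  have h0 := habs j₀ le_rfl
  rcases le_abs'.mp h0 with hlow | hhigh
  · -- x j₀ ≤ dlim - ε : iterates increase by α each step, staying below
    have key : ∀ n : ℕ, x (j₀ + n) ≤ dlim - ε ∧
        x (j₀ + n) = x j₀ + ∑ j ∈ Finset.range n, α (j₀ + j) := by
      intro n
      induction n with
      | zero => simpa using (by linarith : x j₀ ≤ dlim - ε)
      | succ n ih =>
        obtain ⟨hb, hs⟩ := ih
        have hdj := hd (j₀ + n) (Nat.le_add_right _ _)
        have hpos : 0 < d (j₀ + n) - x (j₀ + n) := by
          have := abs_lt.mp hdj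
          linarith [this.1]
        have hsgn : sgn (d (j₀ + n) - x (j₀ + n)) = 1 := by
          simp [sgn, hpos]
        have hstep : x (j₀ + (n + 1)) = x (j₀ + n) + α (j₀ + n) := by
          have := hx (j₀ + n)
          rw [hsgn] at this
          rw [Nat.add_succ, this]; ring
        have hαb := hα (j₀ + n) (Nat.le_add_right _ _)
        have hbelow : x (j₀ + (n + 1)) ≤ dlim - ε / 2 := by linarith
        have habs' := habs (j₀ + (n + 1)) (Nat.le_add_right _ _)
        rcases le_abs'.mp habs' with h1 | h2
        · constructor
          · linarith
          · rw [hstep, hs, Finset.sum_range_succ]; ring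
        · linarith
    -- divergence contradiction
    obtain ⟨m, hm⟩ := (tendsto_atTop.mp hαdiv
      ((∑ j ∈ Finset.range j₀, α j) + (dlim - ε - x j₀) + 1)).exists_forall_of_atTop
    set k := max m j₀ with hk
    have hkm : m ≤ k := le_max_left _ _
    have hkj : j₀ ≤ k := le_max_right _ _
    have hS := hm k hkm
    obtain ⟨n, hn⟩ : ∃ n, k = j₀ + n := ⟨k - j₀, (Nat.add_sub_cancel' hkj).symm⟩
    have hsplit : ∑ j ∈ Finset.range (j₀ + n), α j
        = ∑ j ∈ Finset.range j₀, α j + ∑ j ∈ Finset.range n, α (j₀ + j) :=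
      Finset.sum_range_add α j₀ n
    obtain ⟨hb, hs⟩ := key n
    rw [hn, hsplit] at hS
    linarith
  · -- dlim + ε ≤ x j₀ : iterates decrease
    have key : ∀ n : ℕ, dlim + ε ≤ x (j₀ + n) ∧
        x (j₀ + n) = x j₀ - ∑ j ∈ Finset.range n, α (j₀ + j) := by
      intro n
      induction n with
      | zero => exact ⟨by simpa using (by linarith : dlim + ε ≤ x j₀), by simp⟩
      | succ n ih =>
        obtain ⟨hb, hs⟩ := ih
        have hdj := hd (j₀ + n) (Nat.le_add_right _ _)
        have hneg : d (j₀ + n) - x (j₀ + n) < 0 := by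
          have := abs_lt.mp hdj
          linarith [this.2]
        have hsgn : sgn (d (j₀ + n) - x (j₀ + n)) = -1 := by
          simp [sgn, hneg, not_lt.mpr hneg.le, asymm hneg]
        have hstep : x (j₀ + (n + 1)) = x (j₀ + n) - α (j₀ + n) := by
          have := hx (j₀ + n)
          rw [hsgn] at this
          rw [Nat.add_succ, this]; ring
        have hαb := hα (j₀ + n) (Nat.le_add_right _ _)
        have habove : dlim + ε / 2 ≤ x (j₀ + (n + 1)) := by linarith
        have habs' := habs (j₀ + (n + 1)) (Nat.le_add_right _ _)
        rcases le_abs'.mp habs' with h1 | h2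
        · linarith
        · constructor
          · linarith
          · rw [hstep, hs, Finset.sum_range_succ]; ring
    obtain ⟨m, hm⟩ := (tendsto_atTop.mp hαdiv
      ((∑ j ∈ Finset.range j₀, α j) + (x j₀ - dlim - ε) + 1)).exists_forall_of_atTop
    set k := max m j₀ with hk
    have hkm : m ≤ k := le_max_left _ _
    have hkj : j₀ ≤ k := le_max_right _ _
    have hS := hm k hkm
    obtain ⟨n, hn⟩ : ∃ n, k = j₀ + n := ⟨k - j₀, (Nat.add_sub_cancel' hkj).symm⟩
    have hsplit : ∑ j ∈ Finset.range (j₀ + n), α j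
        = ∑ j ∈ Finset.range j₀, α j + ∑ j ∈ Finset.range n, α (j₀ + j) :=
      Finset.sum_range_add α j₀ n
    obtain ⟨hb, hs⟩ := key n
    rw [hn, hsplit] at hS
    linarith
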